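/- Let j ∈ {1,…,q}, δ > 0, ν > 0 and ς ∈ (0,1]. Let d̂ ∈ ℝⁿ with ‖d̂‖ ≤ δ be a maximizer of the exact Taylor decrement over the ball, i.e. Δt_j(d̂) = φ_j^δ, and let d ∈ ℝⁿ with ‖d‖ ≤ δ satisfy ς·φ̄_j^δ ≤ Δt̄_j(d). If |(T̄_ℓ − T_ℓ)[d̂,…,d̂]| ≤ (ν/2)·Δt̄_j(d̂) for every ℓ ∈ {1,…,j}, then φ_j^δ ≤ ((1+ν)/ς)·Δt̄_j(d). -/

import Mathlib

open scoped BigOperators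

/-- The (inexact or exact) Taylor decrement `Δt_j(d) = -∑_{ℓ=1}^j (1/ℓ!) T_ℓ[d,…,d]`
built from a family of continuous `ℓ`-multilinear forms `T ℓ` on `ℝⁿ`. -/
noncomputable def taylorDecrement {n : ℕ}
    (T : ∀ ℓ : ℕ, ContinuousMultilinearMap ℝ (fun _ : Fin ℓ => EuclideanSpace ℝ (Fin n)) ℝ)
    (j : ℕ) (d : EuclideanSpace ℝ (Fin n)) : ℝ :=
  -∑ ℓ ∈ Finset.Icc 1 j, (1 / (Nat.factorial ℓ : ℝ)) * T ℓ (fun _ => d)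

/-- The optimality measure `φ_j^δ = sup_{‖d‖ ≤ δ} Δt_j(d)`. -/
noncomputable def optimalityMeasure {n : ℕ}
    (T : ∀ ℓ : ℕ, ContinuousMultilinearMap ℝ (fun _ : Fin ℓ => EuclideanSpace ℝ (Fin n)) ℝ)
    (j : ℕ) (δ : ℝ) : ℝ :=
  sSup {x : ℝ | ∃ d : EuclideanSpace ℝ (Fin n), ‖d‖ ≤ δ ∧ x = taylorDecrement T j d}

lemma sum_inv_factorial_le (j : ℕ) (hj : 1 ≤ j) :
    ∑ ℓ ∈ Finset.Icc 1 j, (1 / (Nat.factorial ℓ : ℝ)) ≤ 2 - 1 / (Nat.factorial j : ℝ) := by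
  induction j with
  | zero => omega
  | succ k ih =>
    rcases Nat.eq_or_lt_of_le hj with h1 | h1
    · simp [← h1]
      norm_num
    · have hk : 1 ≤ k := by omega
      have hsum := ih hk
      rw [Finset.sum_Icc_succ_top (by omega : 1 ≤ k + 1)]
      have hfk : (0:ℝ) < (Nat.factorial k : ℝ) := by positivity
      have hfk1 : (0:ℝ) < (Nat.factorial (k+1) : ℝ) := by positivity
      have key : 1 / (Nat.factorial (k+1) : ℝ) + 1 / (Nat.factorial (k+1) : ℝ)
          ≤ 1 / (Nat.factorial k : ℝ) := by
        rw [← add_div, div_le_div_iff₀ hfk1 hfk]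
        have heqf : (Nat.factorial (k+1) : ℝ) = (k+1) * (Nat.factorial k : ℝ) := by
          rw [Nat.factorial_succ]; push_cast; ring
        rw [heqf]
        have h2 : (2:ℝ) ≤ ((k:ℝ)+1) := by
          have : (1:ℝ) ≤ (k:ℝ) := by exact_mod_cast hk
          linarith
        nlinarith
      linarith

lemma taylorDecrement_continuous {n : ℕ}
    (T : ∀ ℓ : ℕ, ContinuousMultilinearMap ℝ (fun _ : Fin ℓ => EuclideanSpace ℝ (Fin n)) ℝ)
    (j : ℕ) : Continuous (taylorDecrement T j) := by
  unfold taylorDecrement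
  apply Continuous.neg
  apply continuous_finset_sum
  intro ℓ _
  exact continuous_const.mul ((T ℓ).cont.comp (continuous_pi fun _ => continuous_id))

lemma bddAbove_decrement_set {n : ℕ}
    (T : ∀ ℓ : ℕ, ContinuousMultilinearMap ℝ (fun _ : Fin ℓ => EuclideanSpace ℝ (Fin n)) ℝ)
    (j : ℕ) (δ : ℝ) :
    BddAbove {x : ℝ | ∃ d : EuclideanSpace ℝ (Fin n), ‖d‖ ≤ δ ∧ x = taylorDecrement T j d} := by
  have hset : {x : ℝ | ∃ d : EuclideanSpace ℝ (Fin n), ‖d‖ ≤ δ ∧ x = taylorDecrement T j d}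
      = taylorDecrement T j '' Metric.closedBall 0 δ := by
    ext x
    simp only [Set.mem_setOf_eq, Set.mem_image, Metric.mem_closedBall, dist_zero_right]
    exact ⟨fun ⟨d, h1, h2⟩ => ⟨d, h1, h2.symm⟩, fun ⟨d, h1, h2⟩ => ⟨d, h1, h2.symm⟩⟩
  rw [hset]
  exact ((isCompact_closedBall _ _).image (taylorDecrement_continuous T j)).bddAbove

theorem exact_measure_le_of_accurate
    (n q : ℕ) (hn : 1 ≤ n) (hq : 1 ≤ q)
    (T Tb : ∀ ℓ : ℕ, ContinuousMultilinearMap ℝ (fun _ : Fin ℓ => EuclideanSpace ℝ (Fin n)) ℝ)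
    (j : ℕ) (hj : j ∈ Finset.Icc 1 q)
    (δ ν ς : ℝ) (hδ : 0 < δ) (hν : 0 < ν) (hς : 0 < ς) (hς1 : ς ≤ 1)
    (dhat : EuclideanSpace ℝ (Fin n)) (hdhat : ‖dhat‖ ≤ δ)
    (hmax : taylorDecrement T j dhat = optimalityMeasure T j δ)
    (d : EuclideanSpace ℝ (Fin n)) (hd : ‖d‖ ≤ δ)
    (hdec : ς * optimalityMeasure Tb j δ ≤ taylorDecrement Tb j d)
    (herr : ∀ ℓ ∈ Finset.Icc 1 j,
      |Tb ℓ (fun _ => dhat) - T ℓ (fun _ => dhat)| ≤ (ν / 2) * taylorDecrement Tb j dhat) :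
    optimalityMeasure T j δ ≤ ((1 + ν) / ς) * taylorDecrement Tb j d := by
  obtain ⟨hj1, hjq⟩ := Finset.mem_Icc.mp hj
  -- notation
  set Δb := taylorDecrement Tb j dhat with hΔb
  -- nonnegativity of Δt̄(d̂)
  have hone : (1 : ℕ) ∈ Finset.Icc 1 j := Finset.mem_Icc.mpr ⟨le_refl 1, hj1⟩
  have hΔbnn : 0 ≤ Δb := by
    have h := herr 1 hone
    nlinarith [abs_nonneg (Tb 1 (fun _ => dhat) - T 1 (fun _ => dhat))]
  -- sum of inverse factorials ≤ 2
  have hsumfac : ∑ ℓ ∈ Finset.Icc 1 j, (1 / (Nat.factorial ℓ : ℝ)) ≤ 2 := by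
    have := sum_inv_factorial_le j hj1
    have : (0:ℝ) < 1 / (Nat.factorial j : ℝ) := by positivity
    linarith [sum_inv_factorial_le j hj1]
  -- |Δt(d̂) - Δt̄(d̂)| bound
  have hdiff : taylorDecrement T j dhat ≤ Δb + ν * Δb := by
    have heq : taylorDecrement T j dhat - Δb
        = ∑ ℓ ∈ Finset.Icc 1 j,
            (1 / (Nat.factorial ℓ : ℝ)) * (Tb ℓ (fun _ => dhat) - T ℓ (fun _ => dhat)) := by
      simp only [hΔb, taylorDecrement]
      rw [neg_sub_neg, ← Finset.sum_sub_distrib]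
      apply Finset.sum_congr rfl
      intro ℓ _
      ring
    have hbound : ∑ ℓ ∈ Finset.Icc 1 j,
        (1 / (Nat.factorial ℓ : ℝ)) * (Tb ℓ (fun _ => dhat) - T ℓ (fun _ => dhat))
        ≤ ∑ ℓ ∈ Finset.Icc 1 j, (1 / (Nat.factorial ℓ : ℝ)) * ((ν / 2) * Δb) := by
      apply Finset.sum_le_sum
      intro ℓ hℓ
      have hfac : (0:ℝ) ≤ 1 / (Nat.factorial ℓ : ℝ) := by positivity
      exact mul_le_mul_of_nonneg_left
        (le_trans (le_abs_self _) (herr ℓ hℓ)) hfac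
    rw [← Finset.sum_mul] at hbound
    have h2 : (∑ ℓ ∈ Finset.Icc 1 j, (1 / (Nat.factorial ℓ : ℝ))) * ((ν / 2) * Δb)
        ≤ 2 * ((ν / 2) * Δb) := by
      apply mul_le_mul_of_nonneg_right hsumfac
      positivity
    nlinarith [heq]
  -- Δt̄(d̂) ≤ φ̄
  have hφb : Δb ≤ optimalityMeasure Tb j δ := by
    apply le_csSup (bddAbove_decrement_set Tb j δ)
    exact ⟨dhat, hdhat, rfl⟩
  -- chain
  have hφ : optimalityMeasure Tb j δ ≤ taylorDecrement Tb j d / ς :=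
    (le_div_iff₀ hς).mpr (by linarith [hdec, mul_comm ς (optimalityMeasure Tb j δ)])
  have h1ν : (0:ℝ) < 1 + ν := by linarith
  calc optimalityMeasure T j δ = taylorDecrement T j dhat := hmax.symm
    _ ≤ (1 + ν) * Δb := by linarith
    _ ≤ (1 + ν) * optimalityMeasure Tb j δ := by nlinarith
    _ ≤ (1 + ν) * (taylorDecrement Tb j d / ς) := by nlinarith
    _ = ((1 + ν) / ς) * taylorDecrement Tb j d := by ring
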